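/- For all integers m ≥ 0 and 0 ≤ j ≤ m, the standard inner product of any point of Λ(m, j) with any point of Λ(m, m) is divisible by 2ʲ. -/

import Mathlib

/-- `Hmat m` : the `2^m × 2^m` matrix defined by `H₀ = [1]` and
`H_{m+1} = [[Hₘ, Hₘ], [0, Hₘ]]` in block form. -/
def Hmat : (m : ℕ) → Matrix (Fin (2 ^ m)) (Fin (2 ^ m)) ℤ
  | 0 => Matrix.of fun _ _ => 1
  | m + 1 =>
      Matrix.reindex
        (finSumFinEquiv.trans (finCongr (by rw [pow_succ, mul_two] :
          2 ^ m + 2 ^ m = 2 ^ (m + 1))))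
        (finSumFinEquiv.trans (finCongr (by rw [pow_succ, mul_two] :
          2 ^ m + 2 ^ m = 2 ^ (m + 1))))
        (Matrix.fromBlocks (Hmat m) (Hmat m) 0 (Hmat m))

/-- `Smat m` : the `2^m × 2^m` Sylvester Hadamard matrix, `𝓗₀ = [1]`,
`𝓗_{m+1} = [[𝓗ₘ, 𝓗ₘ], [𝓗ₘ, −𝓗ₘ]]`. -/
def Smat : (m : ℕ) → Matrix (Fin (2 ^ m)) (Fin (2 ^ m)) ℤ
  | 0 => Matrix.of fun _ _ => 1
  | m + 1 =>
      Matrix.reindex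
        (finSumFinEquiv.trans (finCongr (by rw [pow_succ, mul_two] :
          2 ^ m + 2 ^ m = 2 ^ (m + 1))))
        (finSumFinEquiv.trans (finCongr (by rw [pow_succ, mul_two] :
          2 ^ m + 2 ^ m = 2 ^ (m + 1))))
        (Matrix.fromBlocks (Smat m) (Smat m) (Smat m) (-(Smat m)))

/-- Hamming weight of the `s`-th row of `Hmat m`. -/
def rowWeight (m : ℕ) (s : Fin (2 ^ m)) : ℕ :=
  (Finset.univ.filter (fun t => Hmat m s t ≠ 0)).card

/-- `Gmat m j` : the matrix whose `s`-th row is the `s`-th row of `Hmat m`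
multiplied by `2^(j − ℓ)` (truncated subtraction) where `2^ℓ` is the Hamming
weight of that row. -/
def Gmat (m j : ℕ) : Matrix (Fin (2 ^ m)) (Fin (2 ^ m)) ℤ :=
  Matrix.of fun s t => (2 : ℤ) ^ (j - Nat.log 2 (rowWeight m s)) * Hmat m s t

/-- The lattice generated by the rows of `G`. -/
def latticeOf {n : ℕ} (G : Matrix (Fin n) (Fin n) ℤ) : Set (Fin n → ℤ) :=
  { x | ∃ u : Fin n → ℤ, x = Matrix.vecMul u G }

def Esum (m : ℕ) : Fin (2 ^ m) ⊕ Fin (2 ^ m) ≃ Fin (2 ^ (m + 1)) :=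
  finSumFinEquiv.trans (finCongr (by rw [pow_succ, mul_two] :
    2 ^ m + 2 ^ m = 2 ^ (m + 1)))


lemma H_ll (m : ℕ) (s t : Fin (2 ^ m)) :
    Hmat (m + 1) (Esum m (Sum.inl s)) (Esum m (Sum.inl t)) = Hmat m s t := by
  simp only [Hmat, Esum, Matrix.reindex_apply, Matrix.submatrix_apply,
      Equiv.symm_apply_apply, Matrix.fromBlocks_apply₁₁, Matrix.fromBlocks_apply₁₂,
      Matrix.fromBlocks_apply₂₁, Matrix.fromBlocks_apply₂₂, Matrix.zero_apply]

lemma H_lr (m : ℕ) (s t : Fin (2 ^ m)) :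
    Hmat (m + 1) (Esum m (Sum.inl s)) (Esum m (Sum.inr t)) = Hmat m s t := by
  simp only [Hmat, Esum, Matrix.reindex_apply, Matrix.submatrix_apply,
      Equiv.symm_apply_apply, Matrix.fromBlocks_apply₁₁, Matrix.fromBlocks_apply₁₂,
      Matrix.fromBlocks_apply₂₁, Matrix.fromBlocks_apply₂₂, Matrix.zero_apply]

lemma H_rl (m : ℕ) (s t : Fin (2 ^ m)) :
    Hmat (m + 1) (Esum m (Sum.inr s)) (Esum m (Sum.inl t)) = 0 := by
  simp only [Hmat, Esum, Matrix.reindex_apply, Matrix.submatrix_apply,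
      Equiv.symm_apply_apply, Matrix.fromBlocks_apply₁₁, Matrix.fromBlocks_apply₁₂,
      Matrix.fromBlocks_apply₂₁, Matrix.fromBlocks_apply₂₂, Matrix.zero_apply]

lemma H_rr (m : ℕ) (s t : Fin (2 ^ m)) :
    Hmat (m + 1) (Esum m (Sum.inr s)) (Esum m (Sum.inr t)) = Hmat m s t := by
  simp only [Hmat, Esum, Matrix.reindex_apply, Matrix.submatrix_apply,
      Equiv.symm_apply_apply, Matrix.fromBlocks_apply₁₁, Matrix.fromBlocks_apply₁₂,
      Matrix.fromBlocks_apply₂₁, Matrix.fromBlocks_apply₂₂, Matrix.zero_apply]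

lemma sum_split {M : Type*} [AddCommMonoid M] (m : ℕ) (f : Fin (2 ^ (m + 1)) → M) :
    ∑ i, f i = (∑ s, f (Esum m (Sum.inl s))) + ∑ s, f (Esum m (Sum.inr s)) := by
  rw [← Equiv.sum_comp (Esum m) f, Fintype.sum_sum_type]

lemma rowWeight_eq_sum (m : ℕ) (s : Fin (2 ^ m)) :
    rowWeight m s = ∑ t, if Hmat m s t ≠ 0 then 1 else 0 := by
  rw [rowWeight, Finset.card_filter]

lemma rowWeight_inl (m : ℕ) (s : Fin (2 ^ m)) :
    rowWeight (m + 1) (Esum m (Sum.inl s)) = 2 * rowWeight m s := by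
  rw [rowWeight_eq_sum, sum_split]
  simp only [H_ll, H_lr]
  rw [rowWeight_eq_sum, two_mul]

lemma rowWeight_inr (m : ℕ) (s : Fin (2 ^ m)) :
    rowWeight (m + 1) (Esum m (Sum.inr s)) = rowWeight m s := by
  rw [rowWeight_eq_sum, sum_split]
  simp only [H_rl, H_rr]
  rw [rowWeight_eq_sum]
  simp

lemma rowWeight_pow (m : ℕ) (s : Fin (2 ^ m)) : ∃ ℓ, rowWeight m s = 2 ^ ℓ := by
  induction m with
  | zero =>
      exact ⟨0, by simp [rowWeight_eq_sum, Hmat]⟩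
  | succ m ih =>
      have hs : s = Esum m ((Esum m).symm s) := ((Esum m).apply_symm_apply s).symm
      rcases hx : (Esum m).symm s with a | a
      · obtain ⟨ℓ, hℓ⟩ := ih a
        exact ⟨ℓ + 1, by rw [hs, hx, rowWeight_inl, hℓ, pow_succ, mul_comm]⟩
      · obtain ⟨ℓ, hℓ⟩ := ih a
        exact ⟨ℓ, by rw [hs, hx, rowWeight_inr, hℓ]⟩

lemma L_inl (m : ℕ) (s : Fin (2 ^ m)) :
    Nat.log 2 (rowWeight (m + 1) (Esum m (Sum.inl s))) =
      Nat.log 2 (rowWeight m s) + 1 := by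
  obtain ⟨ℓ, hℓ⟩ := rowWeight_pow m s
  rw [rowWeight_inl, hℓ, ← pow_succ', Nat.log_pow one_lt_two, Nat.log_pow one_lt_two]

lemma L_inr (m : ℕ) (s : Fin (2 ^ m)) :
    Nat.log 2 (rowWeight (m + 1) (Esum m (Sum.inr s))) =
      Nat.log 2 (rowWeight m s) := by
  rw [rowWeight_inr]

lemma L_le (m : ℕ) (s : Fin (2 ^ m)) : Nat.log 2 (rowWeight m s) ≤ m := by
  have h1 : rowWeight m s ≤ 2 ^ m := by
    simpa [rowWeight] using Finset.card_filter_le Finset.univ (fun t => Hmat m s t ≠ 0)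
  calc Nat.log 2 (rowWeight m s) ≤ Nat.log 2 (2 ^ m) := Nat.log_mono_right h1
    _ = m := Nat.log_pow one_lt_two m

lemma key_dvd (m : ℕ) (s t : Fin (2 ^ m)) :
    (2 : ℤ) ^ (Nat.log 2 (rowWeight m s) + Nat.log 2 (rowWeight m t)) ∣
      2 ^ m * ∑ i, Hmat m s i * Hmat m t i := by
  induction m with
  | zero =>

      have h : ∀ u : Fin (2 ^ 0), rowWeight 0 u = 1 := fun u => by
        simp [rowWeight_eq_sum, Hmat]
      simp [h]
  | succ m ih =>

      have hs : s = Esum m ((Esum m).symm s) := ((Esum m).apply_symm_apply s).symm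
      have ht : t = Esum m ((Esum m).symm t) := ((Esum m).apply_symm_apply t).symm
      rw [hs, ht]
      have hsum : ∀ a b : Fin (2 ^ m) ⊕ Fin (2 ^ m),
          ∑ i, Hmat (m+1) (Esum m a) i * Hmat (m+1) (Esum m b) i =
          (∑ i, Hmat (m+1) (Esum m a) (Esum m (Sum.inl i)) *
            Hmat (m+1) (Esum m b) (Esum m (Sum.inl i))) +
          ∑ i, Hmat (m+1) (Esum m a) (Esum m (Sum.inr i)) *
            Hmat (m+1) (Esum m b) (Esum m (Sum.inr i)) := fun a b =>
        sum_split m _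
      rcases (Esum m).symm s with a | a <;> rcases (Esum m).symm t with b | b <;>
        rw [hsum] <;>
        simp only [H_ll, H_lr, H_rl, H_rr, L_inl, L_inr, zero_mul, mul_zero,
          Finset.sum_const_zero, zero_add, add_zero]
      · -- inl inl
        have : (2:ℤ) ^ (m+1) * ((∑ i, Hmat m a i * Hmat m b i) +
            ∑ i, Hmat m a i * Hmat m b i) =
            2 ^ 2 * (2 ^ m * ∑ i, Hmat m a i * Hmat m b i) := by ring
        rw [this, show Nat.log 2 (rowWeight m a) + 1 + (Nat.log 2 (rowWeight m b) + 1)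
          = 2 + (Nat.log 2 (rowWeight m a) + Nat.log 2 (rowWeight m b)) by ring,
          pow_add]
        exact mul_dvd_mul_left _ (ih a b)
      · -- inl inr
        have : (2:ℤ) ^ (m+1) * (∑ i, Hmat m a i * Hmat m b i) =
            2 * (2 ^ m * ∑ i, Hmat m a i * Hmat m b i) := by ring
        rw [this, show Nat.log 2 (rowWeight m a) + 1 + Nat.log 2 (rowWeight m b)
          = 1 + (Nat.log 2 (rowWeight m a) + Nat.log 2 (rowWeight m b)) by ring,
          pow_add, pow_one]
        exact mul_dvd_mul_left _ (ih a b)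
      · -- inr inl
        have : (2:ℤ) ^ (m+1) * (∑ i, Hmat m a i * Hmat m b i) =
            2 * (2 ^ m * ∑ i, Hmat m a i * Hmat m b i) := by ring
        rw [this, show Nat.log 2 (rowWeight m a) + (Nat.log 2 (rowWeight m b) + 1)
          = 1 + (Nat.log 2 (rowWeight m a) + Nat.log 2 (rowWeight m b)) by ring,
          pow_add, pow_one]
        exact mul_dvd_mul_left _ (ih a b)
      · -- inr inr
        have : (2:ℤ) ^ (m+1) * (∑ i, Hmat m a i * Hmat m b i) =
            2 * (2 ^ m * ∑ i, Hmat m a i * Hmat m b i) := by ring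
        rw [this]
        exact Dvd.dvd.mul_left (ih a b) 2

lemma pair_dvd (m j : ℕ) (hj : j ≤ m) (s t : Fin (2 ^ m)) :
    (2 : ℤ) ^ j ∣ ∑ i, Gmat m j s i * Gmat m m t i := by
  obtain ⟨k, hk⟩ := key_dvd m s t
  set a := Nat.log 2 (rowWeight m s) with ha
  set b := Nat.log 2 (rowWeight m t) with hb
  have hsum : ∑ i, Gmat m j s i * Gmat m m t i
      = 2 ^ (j - a) * 2 ^ (m - b) * ∑ i, Hmat m s i * Hmat m t i := by
    simp only [Gmat, Matrix.of_apply, ← ha, ← hb]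
    rw [Finset.mul_sum]
    exact Finset.sum_congr rfl fun i _ => by ring
  rw [hsum, ← mul_dvd_mul_iff_left (pow_ne_zero m (two_ne_zero (α := ℤ)))]
  have heq : (2 : ℤ) ^ m * (2 ^ (j - a) * 2 ^ (m - b) * ∑ i, Hmat m s i * Hmat m t i)
      = 2 ^ ((j - a) + ((m - b) + (a + b))) * k := by
    calc (2 : ℤ) ^ m * (2 ^ (j - a) * 2 ^ (m - b) * ∑ i, Hmat m s i * Hmat m t i)
        = 2 ^ (j - a) * 2 ^ (m - b) * (2 ^ m * ∑ i, Hmat m s i * Hmat m t i) := by ring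
      _ = 2 ^ (j - a) * 2 ^ (m - b) * (2 ^ (a + b) * k) := by rw [hk]
      _ = 2 ^ ((j - a) + ((m - b) + (a + b))) * k := by
          rw [pow_add, pow_add]; ring
  rw [heq, ← pow_add]
  have hbm : b ≤ m := L_le m t
  exact Dvd.dvd.mul_right (pow_dvd_pow 2 (by omega)) k

/-- The inner product of any point of `Λ(m, j)` with any point of `Λ(m, m)` is
divisible by `2^j`. -/
theorem inner_product_Gmj_Gmm_divisible (m j : ℕ) (hj : j ≤ m) :
    ∀ x ∈ latticeOf (Gmat m j), ∀ y ∈ latticeOf (Gmat m m),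
      (2 : ℤ) ^ j ∣ ∑ i, x i * y i := by
  rintro x ⟨u, rfl⟩ y ⟨v, rfl⟩
  simp only [Matrix.vecMul, dotProduct]
  have heq : ∑ i, (∑ s, u s * Gmat m j s i) * (∑ t, v t * Gmat m m t i)
      = ∑ s, ∑ t, (u s * v t) * ∑ i, Gmat m j s i * Gmat m m t i := by
    simp_rw [Finset.sum_mul_sum]
    rw [Finset.sum_comm]
    refine Finset.sum_congr rfl fun s _ => ?_
    rw [Finset.sum_comm]
    refine Finset.sum_congr rfl fun t _ => ?_
    rw [Finset.mul_sum]
    exact Finset.sum_congr rfl fun i _ => by ring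
  rw [heq]
  exact Finset.dvd_sum fun s _ => Finset.dvd_sum fun t _ =>
    Dvd.dvd.mul_left (pair_dvd m j hj s t) _
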